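/- Let Ω ⊂ ℝ^N be bounded, D ⊂ Ω^c of positive measure, and 0 < s < 1. There exists a constant C = C(Ω, N, s, D) > 0 such that for every measurable u : ℝ^N → ℝ vanishing a.e. on D with finite Gagliardo energy over Q_Ω = ℝ^{2N} \ (Ω^c × Ω^c), one has ∫_Ω u² dx ≤ C ∫∫_{Q_Ω} |u(x) − u(y)|² / |x−y|^{N+2s} dx dy (Poincaré inequality for the mixed fractional problem). -/

import Mathlib

open MeasureTheory Metric

theorem stmt9 (N : ℕ) (hN : 0 < N) (s : ℝ) (hs0 : 0 < s) (hs1 : s < 1)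
    (Ω D : Set (EuclideanSpace ℝ (Fin N))) (hΩo : IsOpen Ω)
    (hΩb : Bornology.IsBounded Ω) (hΩne : Ω.Nonempty)
    (hDm : MeasurableSet D) (hD : D ⊆ Ωᶜ) (hDpos : 0 < volume D) :
    ∃ C > 0, ∀ u : EuclideanSpace ℝ (Fin N) → ℝ, Measurable u →
      (∀ᵐ x ∂volume, x ∈ D → u x = 0) →
      IntegrableOn
        (fun p : EuclideanSpace ℝ (Fin N) × EuclideanSpace ℝ (Fin N) =>
          (u p.1 - u p.2) ^ 2 * ‖p.1 - p.2‖ ^ (-((N : ℝ) + 2 * s)))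
        (Set.univ \ (Ωᶜ ×ˢ Ωᶜ)) volume →
      ∫ x in Ω, (u x) ^ 2 ≤
        C * ∫ p in
            (Set.univ \ (Ωᶜ ×ˢ Ωᶜ) :
              Set (EuclideanSpace ℝ (Fin N) × EuclideanSpace ℝ (Fin N))),
          (u p.1 - u p.2) ^ 2 * ‖p.1 - p.2‖ ^ (-((N : ℝ) + 2 * s)) := by
  classical
  obtain ⟨r, hr⟩ := hΩb.subset_ball 0
  -- find a ball on which D has positive measure
  have hcov : D ⊆ ⋃ n : ℕ, D ∩ ball (0 : EuclideanSpace ℝ (Fin N)) n := by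
    intro x hx
    obtain ⟨n, hn⟩ := exists_nat_gt ‖x‖
    exact Set.mem_iUnion.2 ⟨n, hx, by simpa [mem_ball_zero_iff] using hn⟩
  have hex : ∃ n : ℕ, 0 < volume (D ∩ ball (0 : EuclideanSpace ℝ (Fin N)) n) := by
    by_contra h
    push_neg at h
    have h0 : volume (⋃ n : ℕ, D ∩ ball (0 : EuclideanSpace ℝ (Fin N)) n) = 0 :=
      measure_iUnion_null fun n => le_zero_iff.mp (h n)
    exact hDpos.ne' (measure_mono_null hcov h0)
  obtain ⟨n, hn⟩ := hex
  set R : ℝ := max r n with hRdef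
  have hΩR : Ω ⊆ ball (0 : EuclideanSpace ℝ (Fin N)) R :=
    hr.trans (ball_subset_ball (le_max_left _ _))
  set D' : Set (EuclideanSpace ℝ (Fin N)) := D ∩ ball 0 R with hD'def
  have hD'pos : 0 < volume D' :=
    hn.trans_le (measure_mono (Set.inter_subset_inter_right _
      (ball_subset_ball (le_max_right _ _))))
  have hD'm : MeasurableSet D' := hDm.inter measurableSet_ball
  have hD'fin : volume D' < ⊤ :=
    (measure_mono Set.inter_subset_right).trans_lt measure_ball_lt_top
  have hRpos : 0 < R := by
    obtain ⟨x, hx⟩ := hΩne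
    have hx' := mem_ball_zero_iff.mp (hΩR hx)
    exact lt_of_le_of_lt (norm_nonneg x) hx'
  set a : ℝ := (N : ℝ) + 2 * s with ha
  have hapos : 0 < a := by positivity
  set c : ℝ := (2 * R) ^ (-a) with hc
  have hcpos : 0 < c := Real.rpow_pos_of_pos (by linarith) _
  have key : ∀ x ∈ Ω, ∀ y ∈ D', c ≤ ‖x - y‖ ^ (-a) := by
    intro x hx y hy
    have hxR := mem_ball_zero_iff.mp (hΩR hx)
    have hyR := mem_ball_zero_iff.mp hy.2
    have hxy : x ≠ y := fun h => (hD hy.1) (h ▸ hx)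
    have h0 : 0 < ‖x - y‖ := by
      simpa [sub_eq_zero] using hxy
    have h2 : ‖x - y‖ ≤ 2 * R := by
      have := norm_sub_le x y
      linarith
    exact Real.rpow_le_rpow_of_nonpos h0 h2 (by linarith)
  have hvol : 0 < (volume D').toReal := ENNReal.toReal_pos hD'pos.ne' hD'fin.ne
  refine ⟨1 / (c * (volume D').toReal), by positivity, ?_⟩
  intro u hu hu0 hint
  set Q : Set (EuclideanSpace ℝ (Fin N) × EuclideanSpace ℝ (Fin N)) :=
    Set.univ \ (Ωᶜ ×ˢ Ωᶜ) with hQ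
  set f : EuclideanSpace ℝ (Fin N) × EuclideanSpace ℝ (Fin N) → ℝ :=
    fun p => (u p.1 - u p.2) ^ 2 * ‖p.1 - p.2‖ ^ (-a) with hf
  have hnm : Measurable fun p : EuclideanSpace ℝ (Fin N) × EuclideanSpace ℝ (Fin N) =>
      ‖p.1 - p.2‖ := (measurable_fst.sub measurable_snd).norm
  have hker : Measurable fun p : EuclideanSpace ℝ (Fin N) × EuclideanSpace ℝ (Fin N) =>
      ‖p.1 - p.2‖ ^ (-a) := by
    have heq : (fun p : EuclideanSpace ℝ (Fin N) × EuclideanSpace ℝ (Fin N) =>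
        ‖p.1 - p.2‖ ^ (-a)) =
        fun p => if ‖p.1 - p.2‖ = 0 then 0
          else Real.exp (Real.log ‖p.1 - p.2‖ * (-a)) := by
      funext p
      by_cases h : ‖p.1 - p.2‖ = 0
      · simp [h, Real.zero_rpow (neg_ne_zero.mpr hapos.ne')]
      · rw [if_neg h, Real.rpow_def_of_pos (lt_of_le_of_ne (norm_nonneg _) (Ne.symm h))]
    rw [heq]
    exact Measurable.ite (hnm (measurableSet_singleton 0)) measurable_const
      ((hnm.log.mul measurable_const).exp)
  have hfm : Measurable f :=
    (((hu.comp measurable_fst).sub (hu.comp measurable_snd)).pow_const 2).mul hker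
  have hfnn : ∀ p, 0 ≤ f p := fun p =>
    mul_nonneg (sq_nonneg _) (Real.rpow_nonneg (norm_nonneg _) _)
  -- finiteness of the right-hand side lintegral
  have hJ : ∫⁻ p in Q, ENNReal.ofReal (f p) < ⊤ :=
    lt_of_le_of_lt (lintegral_ofReal_le_lintegral_enorm f) hint.2
  -- almost everywhere vanishing on D, lifted to the product
  have hprod : ∀ᵐ p : EuclideanSpace ℝ (Fin N) × EuclideanSpace ℝ (Fin N) ∂volume,
      p.2 ∈ D → u p.2 = 0 := by
    rw [Measure.volume_eq_prod]
    exact Measure.quasiMeasurePreserving_snd.ae hu0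
  have hsub : Ω ×ˢ D' ⊆ Q := by
    rintro ⟨x, y⟩ ⟨hx, hy⟩
    exact ⟨Set.mem_univ _, fun h => h.1 hx⟩
  -- step A: pointwise lower bound on Ω ×ˢ D'
  have hA : ∫⁻ p in Ω ×ˢ D', ENNReal.ofReal (c * u p.1 ^ 2)
      ≤ ∫⁻ p in Ω ×ˢ D', ENNReal.ofReal (f p) := by
    refine lintegral_mono_ae ?_
    have hmem := ae_restrict_mem (μ := volume) ((hΩo.measurableSet).prod hD'm)
    filter_upwards [hmem, ae_restrict_of_ae hprod] with p hp hp2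
    have hx : p.1 ∈ Ω := hp.1
    have hy : p.2 ∈ D' := hp.2
    have hu2 : u p.2 = 0 := hp2 hy.1
    have hle : c * u p.1 ^ 2 ≤ f p := by
      rw [hf]
      simp only [hu2, sub_zero]
      rw [mul_comm c]
      exact mul_le_mul_of_nonneg_left (key _ hx _ hy) (sq_nonneg _)
    exact ENNReal.ofReal_le_ofReal hle
  -- step B: compute the left lintegral via Fubini
  have hB : ∫⁻ p in Ω ×ˢ D', ENNReal.ofReal (c * u p.1 ^ 2)
      = ENNReal.ofReal c * (∫⁻ x in Ω, ENNReal.ofReal (u x ^ 2)) * volume D' := by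
    rw [Measure.volume_eq_prod, ← Measure.prod_restrict]
    rw [lintegral_prod (fun z => ENNReal.ofReal (c * u z.1 ^ 2))
      ((measurable_const.mul ((hu.comp measurable_fst).pow_const 2)).ennreal_ofReal.aemeasurable)]
    have h1 : ∀ x : EuclideanSpace ℝ (Fin N),
        ∫⁻ _ in D', ENNReal.ofReal (c * u x ^ 2)
        = ENNReal.ofReal (c * u x ^ 2) * volume D' := by
      intro x
      rw [lintegral_const, Measure.restrict_apply_univ]
    simp only
    simp_rw [h1]
    rw [lintegral_mul_const (f := fun x => ENNReal.ofReal (c * u x ^ 2)) _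
      (measurable_const.mul (hu.pow_const 2)).ennreal_ofReal]
    congr 1
    simp_rw [ENNReal.ofReal_mul hcpos.le]
    rw [lintegral_const_mul _ (hu.pow_const 2).ennreal_ofReal]
  -- step C: monotonicity of the lintegral in the set
  have hC : ∫⁻ p in Ω ×ˢ D', ENNReal.ofReal (f p) ≤ ∫⁻ p in Q, ENNReal.ofReal (f p) :=
    lintegral_mono_set hsub
  have hchain : ENNReal.ofReal c * (∫⁻ x in Ω, ENNReal.ofReal (u x ^ 2)) * volume D'
      ≤ ∫⁻ p in Q, ENNReal.ofReal (f p) := by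
    rw [← hB]; exact hA.trans hC
  -- convert Bochner integrals to lintegrals
  have hL : ∫ x in Ω, u x ^ 2 = (∫⁻ x in Ω, ENNReal.ofReal (u x ^ 2)).toReal :=
    integral_eq_lintegral_of_nonneg_ae (Filter.Eventually.of_forall fun x => sq_nonneg _)
      (hu.pow_const 2).aestronglyMeasurable
  have hRe : ∫ p in Q, f p = (∫⁻ p in Q, ENNReal.ofReal (f p)).toReal :=
    integral_eq_lintegral_of_nonneg_ae (Filter.Eventually.of_forall hfnn)
      hfm.aestronglyMeasurable
  rw [hL, hRe]
  rw [one_div, inv_mul_eq_div, le_div_iff₀ (by positivity)]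
  have hfin : (ENNReal.ofReal c * (∫⁻ x in Ω, ENNReal.ofReal (u x ^ 2)) * volume D').toReal
      ≤ (∫⁻ p in Q, ENNReal.ofReal (f p)).toReal :=
    ENNReal.toReal_mono hJ.ne hchain
  calc (∫⁻ x in Ω, ENNReal.ofReal (u x ^ 2)).toReal * (c * (volume D').toReal)
      = (ENNReal.ofReal c * (∫⁻ x in Ω, ENNReal.ofReal (u x ^ 2)) * volume D').toReal := by
        rw [ENNReal.toReal_mul, ENNReal.toReal_mul, ENNReal.toReal_ofReal hcpos.le]
        ring
    _ ≤ (∫⁻ p in Q, ENNReal.ofReal (f p)).toReal := hfin
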